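/- For natural numbers k and r, the coefficient of x^r in the polynomial ∏_{j : bit j of k is 1} (1 − x^{2^j}) is nonzero if and only if r AND k = r (bitwise), in which case it equals (−1)^{s(r)} where s(r) is the binary weight of r. -/

import Mathlib

open Polynomial Finset

lemma mem_bitIndices_iff {n i : ℕ} : i ∈ n.bitIndices ↔ n.testBit i := by
  induction n using Nat.binaryRec generalizing i with
  | zero => simp
  | bit b n ih =>
    cases b
    · rw [Nat.bitIndices_bit_false]
      cases i with
      | zero => simp [Nat.testBit_zero]
      | succ i =>
        simp only [List.mem_map, Nat.bit_false, Nat.testBit_succ]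
        rw [Nat.mul_div_cancel_left _ (by norm_num), ← ih]
        constructor
        · rintro ⟨a, ha, h⟩; obtain rfl : a = i := by omega
          exact ha
        · intro h; exact ⟨i, h, rfl⟩
    · rw [Nat.bitIndices_bit_true]
      cases i with
      | zero => simp [Nat.testBit_zero]
      | succ i =>
        simp only [List.mem_cons, List.mem_map, Nat.bit_true, Nat.testBit_succ]
        have : (2 * n + 1) / 2 = n := by omega
        rw [this, ← ih]
        constructor
        · rintro (h | ⟨a, ha, h⟩); · omega
          obtain rfl : a = i := by omega
          exact ha
        · intro h; exact Or.inr ⟨i, h, rfl⟩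

lemma digitsSum_eq (n : ℕ) : (Nat.digits 2 n).sum = n.bitIndices.length := by
  induction n using Nat.binaryRec with
  | zero => simp
  | bit b n ih =>
    have hlen : (Nat.bit b n).bitIndices.length = b.toNat + n.bitIndices.length := by
      cases b
      · rw [Nat.bitIndices_bit_false]; simp
      · rw [Nat.bitIndices_bit_true]; simp [add_comm]
    rcases eq_or_ne (Nat.bit b n) 0 with h0 | h0
    · rw [h0]
      obtain ⟨rfl, rfl⟩ := Nat.bit_eq_zero_iff.mp h0
      simp
    · rw [Nat.digits_def' (by norm_num) (Nat.pos_of_ne_zero h0), hlen,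
        Nat.bit_mod_two, Nat.bit_div_two]
      simp [ih, add_comm]

lemma coeff_prod_one_sub (S : Finset ℕ) (r : ℕ) :
    (∏ j ∈ S, (1 - (X : ℤ[X]) ^ (2 ^ j))).coeff r =
      if r.bitIndices.toFinset ⊆ S then (-1 : ℤ) ^ r.bitIndices.length else 0 := by
  have hexp : ∏ j ∈ S, (1 - (X : ℤ[X]) ^ (2 ^ j)) =
      ∑ t ∈ S.powerset, C ((-1 : ℤ) ^ t.card) * X ^ (∑ j ∈ t, 2 ^ j) := by
    have h1 : ∀ j ∈ S, (1 - (X : ℤ[X]) ^ (2 ^ j)) = (-X ^ (2 ^ j)) + 1 := by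
      intro j _; ring
    rw [Finset.prod_congr rfl h1, Finset.prod_add]
    refine Finset.sum_congr rfl fun t _ => ?_
    rw [Finset.prod_const_one, mul_one]
    have : ∀ j ∈ t, (-(X : ℤ[X]) ^ (2 ^ j)) = (-1) * X ^ (2 ^ j) := fun j _ => by ring
    rw [Finset.prod_congr rfl this, Finset.prod_mul_distrib, Finset.prod_const,
      Finset.prod_pow_eq_pow_sum]
    simp [map_pow]
  rw [hexp, finset_sum_coeff]
  have hC : ∀ t ∈ S.powerset, (C ((-1 : ℤ) ^ t.card) * X ^ (∑ j ∈ t, 2 ^ j)).coeff r =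
      if t = r.bitIndices.toFinset then (-1 : ℤ) ^ t.card else 0 := by
    intro t _
    rw [coeff_C_mul, coeff_X_pow]
    congr 1
    rw [mul_ite, mul_one, mul_zero]
    congr 1
    · apply propext
      constructor
      · rintro rfl; rw [Finset.toFinset_bitIndices_twoPowSum]
      · rintro rfl; rw [Finset.twoPowSum_toFinset_bitIndices]
  rw [Finset.sum_congr rfl hC, Finset.sum_ite_eq']
  have hcard : #r.bitIndices.toFinset = r.bitIndices.length := by
    rw [List.card_toFinset, Nat.bitIndices_sorted.nodup.dedup]
  simp only [Finset.mem_powerset, hcard]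

lemma and_eq_self_iff {r k : ℕ} : r &&& k = r ↔ ∀ i, r.testBit i → k.testBit i := by
  constructor
  · intro h i hi
    have := congrArg (fun x => x.testBit i) h
    simp only [Nat.testBit_and, hi, Bool.true_and] at this
    exact this
  · intro h
    apply Nat.eq_of_testBit_eq
    intro i
    rw [Nat.testBit_and]
    cases hb : r.testBit i
    · simp
    · simp [h i hb]

theorem coeff_subtracting_factor (k r : ℕ) :
    ((∏ j ∈ (Finset.range (k + 1)).filter (fun j => k.testBit j),
        (1 - (X : ℤ[X]) ^ (2 ^ j))).coeff r ≠ 0 ↔ r &&& k = r) ∧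
      (r &&& k = r →
        (∏ j ∈ (Finset.range (k + 1)).filter (fun j => k.testBit j),
            (1 - (X : ℤ[X]) ^ (2 ^ j))).coeff r =
          (-1 : ℤ) ^ ((Nat.digits 2 r).sum)) := by
  have hsub : r.bitIndices.toFinset ⊆
      (Finset.range (k + 1)).filter (fun j => k.testBit j) ↔ r &&& k = r := by
    rw [and_eq_self_iff]
    constructor
    · intro h i hi
      have hm : i ∈ (Finset.range (k + 1)).filter (fun j => k.testBit j) :=
        h (by simpa [List.mem_toFinset] using mem_bitIndices_iff.mpr hi)
      simpa using (Finset.mem_filter.mp hm).2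
    · intro h i hi
      rw [List.mem_toFinset, mem_bitIndices_iff] at hi
      have hk := h i hi
      refine Finset.mem_filter.mpr ⟨Finset.mem_range.mpr ?_, hk⟩
      have h1 : 2 ^ i ≤ k := Nat.ge_two_pow_of_testBit hk
      have h2 : i < 2 ^ i := Nat.lt_two_pow_self (n := i)
      omega
  constructor
  · rw [coeff_prod_one_sub, ← hsub]
    split_ifs with h
    · simpa [h] using pow_ne_zero r.bitIndices.length (by norm_num : (-1 : ℤ) ≠ 0)
    · simp [h]
  · intro h
    rw [coeff_prod_one_sub, if_pos (hsub.mpr h), digitsSum_eq]
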